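/- For any two n×n complex matrices A and B, |det(A) − det(B)| ≤ n · max(‖A‖₂, ‖B‖₂)^{n−1} · ‖A − B‖₂, where ‖·‖₂ denotes the spectral norm. -/

import Mathlib

open Matrix Finset
open scoped ComplexOrder

/-- The spectral norm of a complex square matrix: the operator norm of the induced
linear map on Euclidean space. -/
noncomputable def matrixSpectralNorm {n : ℕ} (A : Matrix (Fin n) (Fin n) ℂ) : ℝ :=
  ‖Matrix.toEuclideanCLM (𝕜 := ℂ) (n := Fin n) A‖

namespace SpecAux

variable {n : ℕ}

/-- Euclidean norm of a column vector. -/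
noncomputable def colNorm (v : Fin n → ℂ) : ℝ :=
  Real.sqrt (∑ i, ‖v i‖ ^ 2)

lemma colNorm_nonneg (v : Fin n → ℂ) : 0 ≤ colNorm v := Real.sqrt_nonneg _

lemma colNorm_eq_norm (v : Fin n → ℂ) :
    colNorm v = ‖(WithLp.equiv 2 (Fin n → ℂ)).symm v‖ := by
  rw [EuclideanSpace.norm_eq]
  simp [colNorm]

lemma colNorm_col_le (M : Matrix (Fin n) (Fin n) ℂ) (j : Fin n) :
    colNorm (fun i => M i j) ≤ matrixSpectralNorm M := by
  have h := (Matrix.toEuclideanCLM (𝕜 := ℂ) (n := Fin n) M).le_opNorm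
      ((WithLp.equiv 2 (Fin n → ℂ)).symm (Pi.single j 1))
  have e : Matrix.toEuclideanCLM (𝕜 := ℂ) (n := Fin n) M ((WithLp.equiv 2 (Fin n → ℂ)).symm (Pi.single j 1))
      = (WithLp.equiv 2 (Fin n → ℂ)).symm (Matrix.toLin' M (Pi.single j 1)) := rfl
  rw [e] at h
  have hx : ‖(WithLp.equiv 2 (Fin n → ℂ)).symm (Pi.single j 1)‖ = 1 := by
    rw [show ((WithLp.equiv 2 (Fin n → ℂ)).symm (Pi.single j 1))
        = EuclideanSpace.single j (1 : ℂ) from rfl, EuclideanSpace.norm_single]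
    simp
  have hcol : Matrix.toLin' M (Pi.single j 1) = fun i => M i j := by
    ext i
    simp [Matrix.toLin'_apply, Matrix.mulVec_single]
  rw [hcol, hx, mul_one] at h
  rw [colNorm_eq_norm]
  exact h

lemma amgm (μ : Fin n → ℝ) (h0 : ∀ i, 0 ≤ μ i) (hs : ∑ i, μ i = (n : ℝ)) :
    ∏ i, μ i ≤ 1 := by
  rcases Nat.eq_zero_or_pos n with hn | hn
  · subst hn; simp
  have hn' : (0 : ℝ) < n := by exact_mod_cast hn
  have h1 : ∏ i, μ i ^ ((n : ℝ)⁻¹) ≤ ∑ i, (n : ℝ)⁻¹ * μ i := by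
    apply Real.geom_mean_le_arith_mean_weighted
    · intro i _; positivity
    · simp [Finset.sum_const, mul_inv_cancel₀ hn'.ne']
    · intro i _; exact h0 i
  have h2 : ∑ i, (n : ℝ)⁻¹ * μ i = 1 := by
    rw [← Finset.mul_sum, hs, inv_mul_cancel₀ hn'.ne']
  rw [h2] at h1
  have h3 : (∏ i, μ i ^ ((n : ℝ)⁻¹)) ^ n = ∏ i, μ i := by
    rw [← Finset.prod_pow]
    refine Finset.prod_congr rfl fun i _ => ?_
    rw [← Real.rpow_natCast (μ i ^ ((n : ℝ)⁻¹)) n, ← Real.rpow_mul (h0 i),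
      inv_mul_cancel₀ hn'.ne', Real.rpow_one]
  rw [← h3]
  exact pow_le_one₀ (Finset.prod_nonneg fun i _ => Real.rpow_nonneg (h0 i) _) h1

lemma det_le_one (M : Matrix (Fin n) (Fin n) ℂ)
    (h : ∀ j, ∑ i, ‖M i j‖ ^ 2 = 1) :
    ‖M.det‖ ≤ 1 := by
  set G := Mᴴ * M with hGdef
  have hpsd : G.PosSemidef := Matrix.posSemidef_conjTranspose_mul_self M
  have hG : G.IsHermitian := hpsd.isHermitian
  -- the determinant of G is |det M|²
  have hdet : G.det = ((‖M.det‖ : ℂ)) ^ 2 := by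
    rw [hGdef, Matrix.det_mul, Matrix.det_conjTranspose]
    have := Complex.mul_conj (M.det)
    rw [mul_comm] at this
    rw [show star M.det = starRingEnd ℂ M.det from rfl, this, Complex.normSq_eq_norm_sq]
    norm_cast
  -- trace of G is n
  have htr : G.trace = (n : ℂ) := by
    have hdiag : ∀ j, G j j = (1 : ℂ) := by
      intro j
      have h1 : G j j = ∑ i, (starRingEnd ℂ) (M i j) * M i j := by
        simp [hGdef, Matrix.mul_apply, Matrix.conjTranspose_apply]
      have h2 : ∀ i, (starRingEnd ℂ) (M i j) * M i j = ((‖M i j‖ ^ 2 : ℝ) : ℂ) := by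
        intro i
        rw [mul_comm, Complex.mul_conj, Complex.normSq_eq_norm_sq]
      rw [h1, Finset.sum_congr rfl fun i _ => h2 i, ← Complex.ofReal_sum, h j,
        Complex.ofReal_one]
    simp [Matrix.trace, Matrix.diag, hdiag]
  -- trace of G is the sum of eigenvalues
  have htr2 : G.trace = ∑ i, (hG.eigenvalues i : ℂ) := by
    conv_lhs => rw [hG.spectral_theorem, Unitary.conjStarAlgAut_apply]
    rw [Matrix.trace_mul_cycle]
    rw [show (star (hG.eigenvectorUnitary : Matrix (Fin n) (Fin n) ℂ)) *
        (hG.eigenvectorUnitary : Matrix (Fin n) (Fin n) ℂ) = 1 from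
      Unitary.coe_star_mul_self _, one_mul, Matrix.trace_diagonal]
    simp
  have hμnn : ∀ i, 0 ≤ hG.eigenvalues i := hpsd.eigenvalues_nonneg
  have hsum : ∑ i, hG.eigenvalues i = (n : ℝ) := by
    have h1 := htr.symm.trans htr2
    exact_mod_cast h1.symm
  have hprod : ‖M.det‖ ^ 2 = ∏ i, hG.eigenvalues i := by
    have h1 := hdet.symm.trans (hG.det_eq_prod_eigenvalues)
    norm_cast at h1
    exact_mod_cast congrArg Complex.re h1
  have hle := amgm hG.eigenvalues hμnn hsum
  rw [← hprod] at hle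
  nlinarith [norm_nonneg M.det]

lemma hadamard (M : Matrix (Fin n) (Fin n) ℂ) :
    ‖M.det‖ ≤ ∏ j, colNorm (fun i => M i j) := by
  by_cases hz : ∃ j, colNorm (fun i => M i j) = 0
  · obtain ⟨j, hj⟩ := hz
    have hsumz : ∑ i, ‖M i j‖ ^ 2 = 0 := by
      have hle : (∑ i, ‖M i j‖ ^ 2) ≤ 0 := Real.sqrt_eq_zero'.mp hj
      have hge : (0:ℝ) ≤ ∑ i, ‖M i j‖ ^ 2 :=
        Finset.sum_nonneg fun i _ => by positivity
      linarith
    have hcolz : ∀ i, M i j = 0 := by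
      intro i
      have h1 : ‖M i j‖ ^ 2 = 0 := by
        have := Finset.sum_eq_zero_iff_of_nonneg
          (fun i _ => by positivity : ∀ i ∈ Finset.univ, 0 ≤ ‖M i j‖ ^ 2)
        exact (this.mp hsumz) i (Finset.mem_univ i)
      have := pow_eq_zero_iff (n := 2) (by norm_num) |>.mp h1
      simpa using this
    rw [Matrix.det_eq_zero_of_column_eq_zero j hcolz]
    simp only [norm_zero]
    exact Finset.prod_nonneg fun j _ => colNorm_nonneg _
  · push_neg at hz
    have hc : ∀ j, 0 < colNorm (fun i => M i j) :=
      fun j => lt_of_le_of_ne (colNorm_nonneg _) (Ne.symm (hz j))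
    set c : Fin n → ℝ := fun j => colNorm (fun i => M i j) with hcdef
    set M' : Matrix (Fin n) (Fin n) ℂ := Matrix.of (fun i j => M i j / (c j : ℂ)) with hM'def
    have hM : M = M' * Matrix.diagonal (fun j => (c j : ℂ)) := by
      ext i j
      rw [Matrix.mul_diagonal]
      have : (c j : ℂ) ≠ 0 := by
        exact_mod_cast (hc j).ne'
      rw [hM'def, Matrix.of_apply, div_mul_cancel₀ _ this]
    have hcolsum : ∀ j, ∑ i, ‖M' i j‖ ^ 2 = 1 := by
      intro j
      have hcsq : c j ^ 2 = ∑ i, ‖M i j‖ ^ 2 := by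
        rw [hcdef]
        exact Real.sq_sqrt (Finset.sum_nonneg fun i _ => by positivity)
      have hne : c j ^ 2 ≠ 0 := pow_ne_zero 2 (hc j).ne'
      have : ∀ i, ‖M' i j‖ ^ 2 = ‖M i j‖ ^ 2 / c j ^ 2 := by
        intro i
        simp [hM'def, norm_div, Complex.norm_real, Real.norm_eq_abs, abs_of_pos (hc j), div_pow]
      rw [Finset.sum_congr rfl fun i _ => this i, ← Finset.sum_div, ← hcsq, div_self hne]
    have hdet1 := det_le_one M' hcolsum
    have : ‖M.det‖ = ‖M'.det‖ * ∏ j, c j := by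
      rw [hM, Matrix.det_mul, norm_mul, Matrix.det_diagonal]
      congr 1
      rw [← Complex.ofReal_prod, Complex.norm_real, Real.norm_eq_abs,
        abs_of_pos (Finset.prod_pos fun j _ => hc j)]
    rw [this]
    calc ‖M'.det‖ * ∏ j, c j ≤ 1 * ∏ j, c j := by
          apply mul_le_mul_of_nonneg_right hdet1
          exact Finset.prod_nonneg fun j _ => (hc j).le
      _ = ∏ j, c j := one_mul _

end SpecAux

theorem stmt_4 (n : ℕ) (A B : Matrix (Fin n) (Fin n) ℂ) :
    ‖A.det - B.det‖ ≤
      n * max (matrixSpectralNorm A) (matrixSpectralNorm B) ^ (n - 1) * matrixSpectralNorm (A - B) := by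
  classical
  set Mx := max (matrixSpectralNorm A) (matrixSpectralNorm B) with hMx
  have hMx0 : 0 ≤ Mx := le_trans (norm_nonneg _) (le_max_left _ _)
  set F : ℕ → Matrix (Fin n) (Fin n) ℂ :=
    fun k => Matrix.of (fun i j => if (j : ℕ) < k then A i j else B i j) with hF
  have hFn : F n = A := by
    ext i j; simp [hF, j.isLt]
  have hF0 : F 0 = B := by
    ext i j; simp [hF]
  have htel : A.det - B.det = ∑ k ∈ Finset.range n, ((F (k+1)).det - (F k).det) := by
    rw [Finset.sum_range_sub (fun k => (F k).det), hFn, hF0]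
  have hterm : ∀ k ∈ Finset.range n,
      ‖(F (k+1)).det - (F k).det‖ ≤ Mx ^ (n-1) * matrixSpectralNorm (A - B) := by
    intro k hk
    rw [Finset.mem_range] at hk
    set j₀ : Fin n := ⟨k, hk⟩ with hj₀
    have h1 : F (k+1) = Matrix.updateCol (F k) j₀ (fun i => A i j₀) := by
      ext i j
      by_cases hjj : j = j₀
      · subst hjj
        simp [Matrix.updateCol_self, hF, hj₀]
      · have hne : (j : ℕ) ≠ k := fun hcc => hjj (Fin.ext (by simpa [hj₀] using hcc))
        rw [Matrix.updateCol_ne hjj]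
        rcases Nat.lt_or_ge (j : ℕ) k with h | h
        · simp [hF, h, Nat.lt_succ_of_lt h]
        · have h2 : ¬ (j : ℕ) < k := not_lt.mpr h
          have h3 : ¬ (j : ℕ) < k + 1 := by omega
          simp [hF, h2, h3]
    have h2 : F k = Matrix.updateCol (F k) j₀ (fun i => B i j₀) := by
      have hcol : (fun i => B i j₀) = fun i => (F k) i j₀ := by
        funext i
        simp [hF, hj₀]
      rw [hcol]
      exact (Matrix.updateCol_eq_self (F k) j₀).symm
    set N : Matrix (Fin n) (Fin n) ℂ :=
      Matrix.updateCol (F k) j₀ (fun i => (A - B) i j₀) with hN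
    have hdiff : (F (k+1)).det - (F k).det = N.det := by
      rw [h1]
      have hadd : (fun i => A i j₀) = (fun i => (A - B) i j₀) + (fun i => B i j₀) := by
        funext i; simp [Matrix.sub_apply]
      rw [hadd, Matrix.det_updateCol_add, ← h2]
      ring
    rw [hdiff]
    calc ‖N.det‖ ≤ ∏ j, SpecAux.colNorm (fun i => N i j) := SpecAux.hadamard N
      _ = SpecAux.colNorm (fun i => N i j₀) *
            ∏ j ∈ Finset.univ.erase j₀, SpecAux.colNorm (fun i => N i j) :=
          (Finset.mul_prod_erase Finset.univ _ (Finset.mem_univ j₀)).symm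
      _ ≤ matrixSpectralNorm (A - B) * Mx ^ (n - 1) := by
          apply mul_le_mul
          · have : (fun i => N i j₀) = fun i => (A - B) i j₀ := by
              funext i; simp [hN, Matrix.updateCol_self]
            rw [this]
            exact SpecAux.colNorm_col_le (A - B) j₀
          · have hbound : ∀ j ∈ Finset.univ.erase j₀,
                SpecAux.colNorm (fun i => N i j) ≤ Mx := by
              intro j hj
              have hjj : j ≠ j₀ := Finset.ne_of_mem_erase hj
              have hNj : (fun i => N i j) = fun i => (F k) i j := by
                funext i; rw [hN, Matrix.updateCol_ne hjj]
              rw [hNj]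
              rcases Nat.lt_or_ge (j : ℕ) k with h | h
              · have : (fun i => (F k) i j) = fun i => A i j := by
                  funext i; simp [hF, h]
                rw [this]
                exact le_trans (SpecAux.colNorm_col_le A j) (le_max_left _ _)
              · have : (fun i => (F k) i j) = fun i => B i j := by
                  funext i; simp [hF, not_lt.mpr h]
                rw [this]
                exact le_trans (SpecAux.colNorm_col_le B j) (le_max_right _ _)
            calc ∏ j ∈ Finset.univ.erase j₀, SpecAux.colNorm (fun i => N i j)
                ≤ ∏ _j ∈ Finset.univ.erase j₀, Mx :=
                  Finset.prod_le_prod (fun j _ => SpecAux.colNorm_nonneg _) hbound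
              _ = Mx ^ (n - 1) := by
                  rw [Finset.prod_const, Finset.card_erase_of_mem (Finset.mem_univ j₀),
                    Finset.card_univ, Fintype.card_fin]
          · exact Finset.prod_nonneg fun j _ => SpecAux.colNorm_nonneg _
          · exact norm_nonneg _
      _ = Mx ^ (n - 1) * matrixSpectralNorm (A - B) := mul_comm _ _
  calc ‖A.det - B.det‖
      = ‖∑ k ∈ Finset.range n, ((F (k+1)).det - (F k).det)‖ := by rw [htel]
    _ ≤ ∑ k ∈ Finset.range n, ‖(F (k+1)).det - (F k).det‖ :=
        norm_sum_le _ _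
    _ ≤ ∑ _k ∈ Finset.range n, Mx ^ (n - 1) * matrixSpectralNorm (A - B) :=
        Finset.sum_le_sum hterm
    _ = n * Mx ^ (n - 1) * matrixSpectralNorm (A - B) := by
        rw [Finset.sum_const, Finset.card_range, nsmul_eq_mul, mul_assoc]
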